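/- For all functions a, a', b, b' : S² → ℝ and all rotations R, R' ∈ SO(3): F_{(a,b,R)} ∘ F_{(a',b',R')} = F_{(a' + a∘R', e^{a∘R'}·b' + b∘R', R·R')} as maps ℝ×S² → ℝ×S², where (a∘R')(s) := a(R'·s) and (e^{a∘R'}·b')(s) := e^{a(R'·s)}·b'(s). In particular the composition of two elements of the horizon symmetry group SG is again an element of SG, with parameter composition (R,a,b) ⊙ (R',a',b') = (RR', a' + a∘R', e^{a∘R'}·b' + b∘R'). -/

import Mathlib

open Metric Matrix

noncomputable section

/-- Euclidean 3-space. -/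
abbrev E3 : Type := EuclideanSpace ℝ (Fin 3)

/-- The unit 2-sphere in Euclidean 3-space. -/
abbrev S2 : Type := Metric.sphere (0 : E3) 1

open scoped Classical in
/-- The action of a matrix on the unit sphere, `s ↦ R·s` (with a junk value if the matrix
does not preserve the sphere; for `R ∈ SO(3)` the first branch is always taken and this is
the genuine rotation action). -/
def sphereRot (R : Matrix (Fin 3) (Fin 3) ℝ) (s : S2) : S2 :=
  if h : ((EuclideanSpace.equiv (Fin 3) ℝ).symm
      (R.mulVec (EuclideanSpace.equiv (Fin 3) ℝ (s : E3)))) ∈ Metric.sphere (0 : E3) 1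
  then ⟨_, h⟩ else s

/-- The horizon symmetry map `F_{(a,b,R)}(u,s) = (e^{a(s)}·u + b(s), R·s)`. -/
def FMap (a b : S2 → ℝ) (R : Matrix (Fin 3) (Fin 3) ℝ) : ℝ × S2 → ℝ × S2 :=
  fun p => (Real.exp (a p.2) * p.1 + b p.2, sphereRot R p.2)



lemma dot_mulVec_self (R : Matrix (Fin 3) (Fin 3) ℝ) (hR : Rᵀ * R = 1) (v : Fin 3 → ℝ) :
    (R.mulVec v) ⬝ᵥ (R.mulVec v) = v ⬝ᵥ v := by
  rw [Matrix.dotProduct_mulVec, Matrix.vecMul_mulVec, hR, Matrix.vecMul_one]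

lemma mem_sphere_mulVec (R : Matrix (Fin 3) (Fin 3) ℝ) (hR : Rᵀ * R = 1) (s : S2) :
    ((EuclideanSpace.equiv (Fin 3) ℝ).symm
      (R.mulVec (EuclideanSpace.equiv (Fin 3) ℝ (s : E3)))) ∈ Metric.sphere (0 : E3) 1 := by
  have hs := s.2
  rw [mem_sphere_zero_iff_norm] at hs ⊢
  rw [EuclideanSpace.norm_eq] at hs ⊢
  simp only [Real.norm_eq_abs, sq_abs] at hs ⊢
  have h1 : ∑ i, ((EuclideanSpace.equiv (Fin 3) ℝ).symm
      (R.mulVec (EuclideanSpace.equiv (Fin 3) ℝ (s : E3))) i)^2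
      = (R.mulVec (fun i => (s : E3) i)) ⬝ᵥ (R.mulVec (fun i => (s : E3) i)) := by
    simp [dotProduct, sq]
    rfl
  rw [h1, dot_mulVec_self R hR]
  simpa [dotProduct, sq] using hs

lemma sphereRot_coe (R : Matrix (Fin 3) (Fin 3) ℝ) (hR : Rᵀ * R = 1) (s : S2) :
    ((sphereRot R s : S2) : E3) = (EuclideanSpace.equiv (Fin 3) ℝ).symm
      (R.mulVec (EuclideanSpace.equiv (Fin 3) ℝ (s : E3))) := by
  rw [sphereRot, dif_pos (mem_sphere_mulVec R hR s)]

lemma sphereRot_mul (R R' : Matrix (Fin 3) (Fin 3) ℝ) (hR : Rᵀ * R = 1) (hR' : R'ᵀ * R' = 1)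
    (s : S2) : sphereRot (R * R') s = sphereRot R (sphereRot R' s) := by
  have hRR' : (R * R')ᵀ * (R * R') = 1 := by
    rw [Matrix.transpose_mul, Matrix.mul_assoc, ← Matrix.mul_assoc Rᵀ, hR, Matrix.one_mul, hR']
  apply Subtype.ext
  rw [sphereRot_coe _ hRR', sphereRot_coe _ hR, sphereRot_coe _ hR']
  simp [Matrix.mulVec_mulVec]
  exact (Matrix.mulVec_mulVec _ _ _).symm

/-- Composition law of the horizon symmetry group `SG`:
`F_{(a,b,R)} ∘ F_{(a',b',R')} = F_{(a' + a∘R', e^{a∘R'}·b' + b∘R', R·R')}`. -/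
theorem FMap_comp (a a' b b' : S2 → ℝ) (R R' : Matrix (Fin 3) (Fin 3) ℝ)
    (hR : Rᵀ * R = 1) (hRdet : R.det = 1)
    (hR' : R'ᵀ * R' = 1) (hR'det : R'.det = 1) :
    FMap a b R ∘ FMap a' b' R' =
      FMap (fun s => a' s + a (sphereRot R' s))
        (fun s => Real.exp (a (sphereRot R' s)) * b' s + b (sphereRot R' s))
        (R * R') := by
  funext p
  obtain ⟨u, s⟩ := p
  simp only [Function.comp_apply, FMap]
  refine Prod.ext ?_ ?_
  · simp only
    rw [Real.exp_add]
    ring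
  · exact (sphereRot_mul R R' hR hR' s).symm
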